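/- Let J_n be an n×n matrix of the form: tridiagonal with real diagonal entries c_1,...,c_{n−1} and complex a_n in position (n,n), superdiagonal entries b_1,...,b_{n−1} ∈ ℂ∖{0} with conjugates below, and corner entries (1,n) = conj(b_n), (n,1) = b_n with b_n ∈ ℂ∖{0}. Let J_{n−1} be its leading principal (n−1)×(n−1) submatrix with eigenvalues μ_1 < ... < μ_{n−1}, and χ_n, χ_{n−1} the characteristic polynomials of J_n and J_{n−1}. Then for each k = 1,...,n−1, (−1)^{n−k} χ_n(μ_k) ≥ 0. -/

import Mathlib

open Polynomial Matrix Finset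

noncomputable section

lemma det_diag_add_rank_one {ι : Type*} [Fintype ι] [DecidableEq ι]
    (δ u r : ι → ℂ) (k : ι) (hδ : δ k = 0) :
    (Matrix.of fun i j => Matrix.diagonal δ i j + u i * r j).det
      = u k * r k * ∏ j ∈ Finset.univ.erase k, δ j := by
  set Ms : Finset ι → Matrix ι ι ℂ := fun s => Matrix.of fun i j =>
    if i = k then r j else Matrix.diagonal δ i j + (if i ∈ s then 0 else u i * r j) with hMs
  have step1 : (Matrix.of fun i j => Matrix.diagonal δ i j + u i * r j)
      = Matrix.updateRow (Ms ∅) k (u k • r) := by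
    ext i j
    by_cases h : i = k
    · subst h
      simp only [Matrix.updateRow_self, Pi.smul_apply, smul_eq_mul, Matrix.of_apply,
        Matrix.diagonal_apply]
      by_cases hj : i = j <;> simp [hj, hδ]
      · simp [← hj, hδ]
    · simp [Matrix.updateRow_ne h, hMs, h]
  have step2 : ∀ s : Finset ι, k ∉ s → (Ms s).det = (Ms ∅).det := by
    intro s
    induction s using Finset.induction_on with
    | empty => intro _; rfl
    | @insert i₀ s hi₀ ih =>
      intro hk
      have hki : k ∉ s := fun h => hk (Finset.mem_insert_of_mem h)
      have hik : i₀ ≠ k := fun h => hk (h ▸ Finset.mem_insert_self _ _)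
      have heq : Ms (insert i₀ s) =
          Matrix.updateRow (Ms s) i₀ ((Ms s) i₀ + (-u i₀) • (Ms s) k) := by
        ext i j
        by_cases h : i = i₀
        · subst h
          simp only [Matrix.updateRow_self, hMs, Matrix.of_apply, if_neg hik,
            Pi.add_apply, Pi.smul_apply, if_pos rfl, if_neg hi₀, smul_eq_mul,
            Finset.mem_insert, true_or, if_pos]
          ring
        · simp only [Matrix.updateRow_ne h, hMs, Matrix.of_apply]
          by_cases hik' : i = k
          · simp [hik']
          · simp [if_neg hik', Finset.mem_insert, h]
      rw [heq, Matrix.det_updateRow_add_smul_self _ hik, ih hki]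
  have step3 : Ms (Finset.univ.erase k) = Matrix.updateRow (Matrix.diagonal δ) k r := by
    ext i j
    by_cases h : i = k
    · subst h; simp [hMs]
    · simp [hMs, h, Finset.mem_erase]
  have step4 : (Matrix.updateRow (Matrix.diagonal δ) k r).det
      = r k * ∏ j ∈ Finset.univ.erase k, δ j := by
    have hr : r = ∑ j, Pi.single j (r j) := by
      rw [Finset.univ_sum_single]
    rw [hr]
    have hml : (Matrix.updateRow (Matrix.diagonal δ) k (∑ j, Pi.single j (r j))).det
        = ∑ j, (Matrix.updateRow (Matrix.diagonal δ) k (Pi.single j (r j))).det := by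
      have := (Matrix.detRowAlternating (R := ℂ) (n := ι)).map_update_sum
        (Finset.univ) k (fun j => Pi.single j (r j)) (Matrix.diagonal δ)
      exact this
    rw [hml]
    have hterm : ∀ j, (Matrix.updateRow (Matrix.diagonal δ) k (Pi.single j (r j))).det
        = if j = k then r k * ∏ j ∈ Finset.univ.erase k, δ j else 0 := by
      intro j
      by_cases hjk : j = k
      · subst hjk
        have : Matrix.updateRow (Matrix.diagonal δ) j (Pi.single j (r j))
            = Matrix.diagonal (Function.update δ j (r j)) := by
          ext i j'
          by_cases h : i = j
          · subst h
            by_cases h' : i = j' <;>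
              simp [Matrix.updateRow_self, Pi.single_apply, Matrix.diagonal_apply, h',
                Function.update, eq_comm]
          · rw [Matrix.updateRow_ne h]
            by_cases h' : i = j'
            · subst h'; simp [Matrix.diagonal_apply, Function.update, h]
            · simp [Matrix.diagonal_apply, Function.update, h, h']
        rw [if_pos rfl, this, Matrix.det_diagonal]
        rw [Finset.prod_update_of_mem (Finset.mem_univ j)]
        rw [Finset.sdiff_singleton_eq_erase]
      · rw [if_neg hjk]
        apply Matrix.det_eq_zero_of_column_eq_zero k
        intro i
        by_cases h : i = k
        · subst h; simp [Matrix.updateRow_self, Pi.single_apply, Ne.symm hjk, hjk]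
        · simp [Matrix.updateRow_ne h, Matrix.diagonal_apply_ne _ h]
    simp only [hterm]
    simp
  rw [step1, Matrix.det_updateRow_smul]
  have : Matrix.updateRow (Ms ∅) k r = Ms ∅ := by
    ext i j
    by_cases h : i = k
    · subst h; simp [Matrix.updateRow_self, hMs]
    · simp [Matrix.updateRow_ne h]
  rw [this, ← step2 _ (Finset.notMem_erase k _), step3, step4]
  ring

lemma charpoly_eval_det {ι : Type*} [Fintype ι] [DecidableEq ι]
    (M : Matrix ι ι ℂ) (x : ℂ) :
    M.charpoly.eval x = (Matrix.diagonal (fun _ => x) - M).det := by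
  rw [Matrix.charpoly, ← Polynomial.coe_evalRingHom, RingHom.map_det]
  congr 1
  ext i j
  by_cases h : i = j <;>
    simp [Matrix.charmatrix_apply, Matrix.diagonal_apply, h]

lemma det_conj_unitary {ι : Type*} [Fintype ι] [DecidableEq ι]
    (W : Matrix ι ι ℂ) (hW : star W * W = 1) (B : Matrix ι ι ℂ) :
    (star W * B * W).det = B.det := by
  have h1 : W.det * (star W).det = 1 := by
    have := congrArg Matrix.det hW
    rwa [Matrix.det_mul, Matrix.det_one, mul_comm] at this
  rw [Matrix.det_mul, Matrix.det_mul]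
  calc (star W).det * B.det * W.det = B.det * (W.det * (star W).det) := by ring
    _ = B.det := by rw [h1, mul_one]

lemma main_lemma {m : ℕ} (J : Matrix (Fin (m+1)) (Fin (m+1)) ℂ)
    (A : Matrix (Fin m) (Fin m) ℂ)
    (hsub : ∀ i j : Fin m, A i j = J (Fin.castSucc i) (Fin.castSucc j))
    (hAH : A.IsHermitian)
    (hcorner : ∀ j : Fin m, J (Fin.last m) (Fin.castSucc j)
        = starRingEnd ℂ (J (Fin.castSucc j) (Fin.last m)))
    (μ : Fin m → ℝ) (hμ : StrictMono μ)
    (hchar : A.charpoly = ∏ j, (X - C ((μ j : ℂ))))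
    (k : Fin m) :
    ∃ t : ℝ, J.charpoly.eval ((μ k : ℂ)) = (t : ℂ) ∧
      0 ≤ (-1 : ℝ) ^ (m - (k : ℕ)) * t := by
  classical
  set W : Matrix (Fin m) (Fin m) ℂ := (hAH.eigenvectorUnitary : Matrix (Fin m) (Fin m) ℂ) with hW
  set ev : Fin m → ℝ := hAH.eigenvalues with hev
  have hWW : star W * W = 1 := Matrix.mem_unitaryGroup_iff'.mp hAH.eigenvectorUnitary.2
  have hWW' : W * star W = 1 := Matrix.mem_unitaryGroup_iff.mp hAH.eigenvectorUnitary.2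
  have hdiag : star W * A * W = Matrix.diagonal (fun i => ((ev i : ℝ) : ℂ)) := by
    have := hAH.conjStarAlgAut_star_eigenvectorUnitary
    rw [Unitary.conjStarAlgAut_star_apply] at this
    exact this
  -- the eigenvalues agree with μ up to a bijection
  have hpoly : ∀ x : ℂ, (∏ i, (x - ((ev i : ℝ) : ℂ))) = ∏ j, (x - ((μ j : ℝ) : ℂ)) := by
    intro x
    have h1 : (∏ i, (x - ((ev i : ℝ) : ℂ)))
        = (Matrix.diagonal (fun i => x - ((ev i : ℝ) : ℂ))).det := by
      rw [Matrix.det_diagonal]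
    have h2 : Matrix.diagonal (fun i : Fin m => x - ((ev i : ℝ) : ℂ))
        = star W * (Matrix.diagonal (fun _ => x) - A) * W := by
      rw [Matrix.mul_sub, Matrix.sub_mul, hdiag]
      have : star W * Matrix.diagonal (fun _ : Fin m => x) * W
          = Matrix.diagonal (fun _ : Fin m => x) := by
        rw [← Matrix.smul_one_eq_diagonal, Matrix.mul_smul, Matrix.mul_one,
          Matrix.smul_mul, hWW]
      rw [this, Matrix.diagonal_sub]
    rw [h1, h2, det_conj_unitary _ hWW, ← charpoly_eval_det, hchar]
    simp [eval_prod]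
  have hPeq : (∏ i, (X - C ((ev i : ℝ) : ℂ))) = ∏ j, (X - C ((μ j : ℝ) : ℂ)) := by
    apply Polynomial.funext
    intro x
    simpa [eval_prod] using hpoly x
  have hroots : ∀ f : Fin m → ℂ,
      (Multiset.map (fun i => X - C (f i)) Finset.univ.val).prod.roots
        = Multiset.map f Finset.univ.val := by
    intro f
    have hc : (fun i => X - C (f i)) = (fun a : ℂ => X - C a) ∘ f := rfl
    rw [hc, ← Multiset.map_map (fun a : ℂ => X - C a) f]
    exact Polynomial.roots_multiset_prod_X_sub_C _
  have hms : (Finset.univ.val.map fun i => ((ev i : ℝ) : ℂ))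
      = Finset.univ.val.map (fun j => ((μ j : ℝ) : ℂ)) := by
    have h1 := congrArg Polynomial.roots hPeq
    rw [Finset.prod_eq_multiset_prod, Finset.prod_eq_multiset_prod] at h1
    rwa [hroots, hroots] at h1
  have hex : ∀ j : Fin m, ∃ i : Fin m, ((ev i : ℝ) : ℂ) = ((μ j : ℝ) : ℂ) := by
    intro j
    have hmem : ((μ j : ℝ) : ℂ) ∈ Finset.univ.val.map (fun j => ((μ j : ℝ) : ℂ)) :=
      Multiset.mem_map_of_mem _ (Finset.mem_val.mpr (Finset.mem_univ j))
    rw [← hms] at hmem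
    obtain ⟨i, -, hi⟩ := Multiset.mem_map.mp hmem
    exact ⟨i, hi⟩
  choose σ hσ using hex
  have hσR : ∀ j, ev (σ j) = μ j := fun j => by exact_mod_cast hσ j
  have hσinj : Function.Injective σ := by
    intro j j' h
    apply hμ.injective
    rw [← hσR j, ← hσR j', h]
  have hσbij : Function.Bijective σ := Finite.injective_iff_bijective.mp hσinj
  -- the bordered determinant computation
  set v : Fin m → ℂ := fun i => J (Fin.castSucc i) (Fin.last m) with hv
  set sc : ℂ := ((μ k : ℝ) : ℂ) - J (Fin.last m) (Fin.last m) with hsc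
  set B : Matrix (Fin m) (Fin m) ℂ :=
    Matrix.diagonal (fun _ => ((μ k : ℝ) : ℂ)) - A with hB
  have hdetB : B.det = 0 := by
    rw [hB, ← charpoly_eval_det, hchar]
    rw [eval_prod]
    apply Finset.prod_eq_zero (Finset.mem_univ k)
    simp
  set C : Matrix (Fin m) (Fin 1) ℂ := Matrix.of fun i _ => -v i with hC
  set R : Matrix (Fin 1) (Fin m) ℂ :=
    Matrix.of fun _ j => -((starRingEnd ℂ) (v j)) with hR
  set N : Matrix (Fin (m+1)) (Fin (m+1)) ℂ :=
    Matrix.diagonal (fun _ => ((μ k : ℝ) : ℂ)) - J with hN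
  have hevalJ : J.charpoly.eval ((μ k : ℝ) : ℂ) = N.det := charpoly_eval_det J _
  have hNsub : N.submatrix (finSumFinEquiv (m := m) (n := 1))
      (finSumFinEquiv (m := m) (n := 1))
      = Matrix.fromBlocks B C R (Matrix.of fun _ _ => sc) := by
    ext x y
    have h10 : ∀ x : Fin 1, x = 0 := fun x => Subsingleton.elim x 0
    have hnat : Fin.natAdd m (0 : Fin 1) = Fin.last m := by
      ext; simp [Fin.last]
    cases x with
    | inl i =>
      cases y with
      | inl j =>
        simp only [Matrix.submatrix_apply, finSumFinEquiv_apply_left,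
          Matrix.fromBlocks_apply₁₁, hN, Matrix.sub_apply, hB]
        have : Fin.castAdd 1 i = Fin.castSucc i := rfl
        rw [this, show Fin.castAdd 1 j = Fin.castSucc j from rfl, hsub]
        congr 1
        by_cases h : i = j
        · subst h; simp [Matrix.diagonal_apply]
        · rw [Matrix.diagonal_apply_ne _ (by simpa [Fin.castSucc_inj] using h),
            Matrix.diagonal_apply_ne _ h]
      | inr y =>
        rw [h10 y]
        simp only [Matrix.submatrix_apply, finSumFinEquiv_apply_left,
          finSumFinEquiv_apply_right, Matrix.fromBlocks_apply₁₂, hN, Matrix.sub_apply,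
          hC, Matrix.of_apply, hnat]
        rw [show Fin.castAdd 1 i = Fin.castSucc i from rfl,
          Matrix.diagonal_apply_ne _ (Fin.ne_last_of_lt (Fin.castSucc_lt_last i)), hv]
        ring
    | inr x =>
      rw [h10 x]
      cases y with
      | inl j =>
        simp only [Matrix.submatrix_apply, finSumFinEquiv_apply_left,
          finSumFinEquiv_apply_right, Matrix.fromBlocks_apply₂₁, hN, Matrix.sub_apply,
          hR, Matrix.of_apply, hnat]
        rw [show Fin.castAdd 1 j = Fin.castSucc j from rfl,
          Matrix.diagonal_apply_ne _ (Fin.ne_last_of_lt (Fin.castSucc_lt_last j)).symm,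
          hcorner, hv]
        ring
      | inr y =>
        rw [h10 y]
        simp only [Matrix.submatrix_apply, finSumFinEquiv_apply_right,
          Matrix.fromBlocks_apply₂₂, hN, Matrix.sub_apply, Matrix.of_apply, hnat, hsc]
        rw [Matrix.diagonal_apply_eq]
  have hdet1 : N.det = (Matrix.fromBlocks B C R (Matrix.of fun _ _ => sc)).det := by
    rw [← hNsub, Matrix.det_submatrix_equiv_self]
  -- the value is independent of the corner entry: replace `sc` by 1
  have hindep : (Matrix.fromBlocks B C R (Matrix.of fun _ _ => sc)).det
      = (Matrix.fromBlocks B C R (1 : Matrix (Fin 1) (Fin 1) ℂ)).det := by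
    set F2 : Matrix (Fin m ⊕ Fin 1) (Fin m ⊕ Fin 1) ℂ :=
      Matrix.fromBlocks B C R (1 : Matrix (Fin 1) (Fin 1) ℂ) with hF2
    have heq : Matrix.fromBlocks B C R (Matrix.of fun _ _ => sc)
        = Matrix.updateRow F2 (Sum.inr 0)
            (F2 (Sum.inr 0) + (sc - 1) • (Pi.single (Sum.inr 0) 1 : Fin m ⊕ Fin 1 → ℂ)) := by
      ext x y
      by_cases hx : x = Sum.inr 0
      · subst hx
        rw [Matrix.updateRow_self]
        cases y with
        | inl j => simp [hF2]
        | inr y =>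
          rw [Subsingleton.elim y 0]
          simp [hF2, Matrix.one_apply, Pi.single_apply]
      · rw [Matrix.updateRow_ne hx]
        cases x with
        | inl i => cases y <;> simp [hF2]
        | inr x => exact absurd (congrArg Sum.inr (Subsingleton.elim x 0)) hx
    rw [heq, Matrix.det_updateRow_add, Matrix.updateRow_eq_self,
      Matrix.det_updateRow_smul]
    have hzero : Matrix.updateRow F2 (Sum.inr 0) ((Pi.single (Sum.inr 0) 1 : Fin m ⊕ Fin 1 → ℂ))
        = Matrix.fromBlocks B C (0 : Matrix (Fin 1) (Fin m) ℂ) 1 := by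
      ext x y
      by_cases hx : x = Sum.inr 0
      · subst hx
        rw [Matrix.updateRow_self]
        cases y with
        | inl j => simp [Pi.single_apply]
        | inr y =>
          rw [Subsingleton.elim y 0]
          simp [Matrix.one_apply, Pi.single_apply]
      · rw [Matrix.updateRow_ne hx]
        cases x with
        | inl i => cases y <;> simp [hF2]
        | inr x => exact absurd (congrArg Sum.inr (Subsingleton.elim x 0)) hx
    rw [hzero, Matrix.det_fromBlocks_zero₂₁, hdetB]
    ring
  have hdet2 : (Matrix.fromBlocks B C R (1 : Matrix (Fin 1) (Fin 1) ℂ)).det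
      = (B - C * R).det := Matrix.det_fromBlocks_one₂₂ B C R
  -- conjugate by the eigenvector unitary
  set cc : Fin m → ℂ := (star W) *ᵥ v with hcc
  set δ : Fin m → ℂ := fun i => ((μ k : ℝ) : ℂ) - ((ev i : ℝ) : ℂ) with hδ
  have hCRmat : C * R = Matrix.of fun i j => v i * (starRingEnd ℂ) (v j) := by
    ext i j
    simp only [Matrix.mul_apply, hC, hR, Matrix.of_apply, Fin.sum_univ_one]
    ring
  have houter : star W * (Matrix.of fun i j => v i * (starRingEnd ℂ) (v j)) * W
      = Matrix.of fun i j => cc i * (starRingEnd ℂ) (cc j) := by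
    ext i j
    have h1 : (star W * (Matrix.of fun i j => v i * (starRingEnd ℂ) (v j)) * W) i j
        = ∑ q, (∑ p, (star W) i p * (v p * (starRingEnd ℂ) (v q))) * W q j := by
      simp [Matrix.mul_apply]
    have h2 : cc i * (starRingEnd ℂ) (cc j)
        = ∑ p, ∑ q, ((star W) i p * v p) * ((starRingEnd ℂ) ((star W) j q * v q)) := by
      rw [hcc]
      simp only [Matrix.mulVec, dotProduct, map_sum, Finset.sum_mul, Finset.mul_sum]
      rw [Finset.sum_comm]
    rw [Matrix.of_apply, h1, h2, Finset.sum_comm]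
    apply Finset.sum_congr rfl
    intro q _
    rw [Finset.sum_mul]
    apply Finset.sum_congr rfl
    intro p _
    simp only [Matrix.star_apply, RCLike.star_def, _root_.map_mul, Complex.conj_conj]
    ring
  have hB1 : star W * B * W = Matrix.diagonal δ := by
    rw [hB, Matrix.mul_sub, Matrix.sub_mul, hdiag]
    have hscal : star W * Matrix.diagonal (fun _ : Fin m => ((μ k : ℝ) : ℂ)) * W
        = Matrix.diagonal (fun _ : Fin m => ((μ k : ℝ) : ℂ)) := by
      rw [← Matrix.smul_one_eq_diagonal, Matrix.mul_smul, Matrix.mul_one, Matrix.smul_mul, hWW]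
    rw [hscal, Matrix.diagonal_sub]
  have hBCR : star W * (B - C * R) * W
      = Matrix.of fun i j => Matrix.diagonal δ i j + (-(cc i)) * ((starRingEnd ℂ) (cc j)) := by
    rw [Matrix.mul_sub, Matrix.sub_mul, hB1, hCRmat, houter]
    ext i j
    simp only [Matrix.sub_apply, Matrix.of_apply]
    ring
  have hdet3 : (B - C * R).det
      = (-(cc (σ k))) * ((starRingEnd ℂ) (cc (σ k))) * ∏ j ∈ Finset.univ.erase (σ k), δ j := by
    rw [← det_conj_unitary W hWW (B - C * R), hBCR]
    exact det_diag_add_rank_one δ _ _ (σ k) (by rw [hδ]; simp [hσR k])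
  -- transport the product along σ
  have hprodσ : (∏ j ∈ Finset.univ.erase (σ k), δ j)
      = ((∏ j ∈ Finset.univ.erase k, (μ k - μ j) : ℝ) : ℂ) := by
    have h1 : (∏ j ∈ Finset.univ.erase (σ k), δ j)
        = ∏ j ∈ Finset.univ.erase k, δ (σ j) := by
      refine (Finset.prod_bij (fun j _ => σ j) ?_ ?_ ?_ ?_).symm
      · intro j hj
        rcases Finset.mem_erase.mp hj with ⟨hj1, -⟩
        exact Finset.mem_erase.mpr ⟨fun h => hj1 (hσinj h), Finset.mem_univ _⟩
      · intro j₁ _ j₂ _ h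
        exact hσinj h
      · intro y hy
        rcases Finset.mem_erase.mp hy with ⟨hy1, -⟩
        obtain ⟨j, hj⟩ := hσbij.2 y
        exact ⟨j, Finset.mem_erase.mpr ⟨fun h => hy1 (by rw [← hj, h]), Finset.mem_univ _⟩, hj⟩
      · intro j _; rfl
    rw [h1]
    rw [Complex.ofReal_prod]
    apply Finset.prod_congr rfl
    intro j _
    rw [hδ]
    simp [hσR j]
  set P : ℝ := ∏ j ∈ Finset.univ.erase k, (μ k - μ j) with hP
  set nsq : ℝ := Complex.normSq (cc (σ k)) with hnsq
  refine ⟨-(nsq * P), ?_, ?_⟩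
  · rw [hevalJ, hdet1, hindep, hdet2, hdet3, hprodσ]
    rw [show (-(cc (σ k))) * ((starRingEnd ℂ) (cc (σ k))) = -((nsq : ℝ) : ℂ) by
      rw [hnsq]; rw [← Complex.mul_conj]; push_cast; ring]
    push_cast
    ring
  · -- sign analysis
    have hsplit : Finset.univ.erase k = Finset.Iio k ∪ Finset.Ioi k := by
      ext j
      simp only [Finset.mem_erase, Finset.mem_univ, and_true, Finset.mem_union,
        Finset.mem_Iio, Finset.mem_Ioi, Fin.lt_def, ne_eq, Fin.ext_iff]
      omega
    have hdisj : Disjoint (Finset.Iio k) (Finset.Ioi k) := by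
      rw [Finset.disjoint_left]
      intro j h1 h2
      exact absurd ((Finset.mem_Iio.mp h1).trans (Finset.mem_Ioi.mp h2)) (lt_irrefl _)
    have hPfact : P = (∏ j ∈ Finset.Iio k, (μ k - μ j)) * ∏ j ∈ Finset.Ioi k, (μ k - μ j) := by
      rw [hP, hsplit, Finset.prod_union hdisj]
    have hneg : (∏ j ∈ Finset.Ioi k, (μ k - μ j))
        = (-1 : ℝ) ^ (m - 1 - (k : ℕ)) * ∏ j ∈ Finset.Ioi k, (μ j - μ k) := by
      have h1 : (∏ j ∈ Finset.Ioi k, (μ k - μ j))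
          = ∏ j ∈ Finset.Ioi k, ((-1 : ℝ) * (μ j - μ k)) := by
        apply Finset.prod_congr rfl
        intro j _; ring
      rw [h1, Finset.prod_mul_distrib, Finset.prod_const, Fin.card_Ioi]
    have hQ1 : 0 ≤ ∏ j ∈ Finset.Iio k, (μ k - μ j) := by
      apply Finset.prod_nonneg
      intro j hj
      have := hμ (Finset.mem_Iio.mp hj)
      linarith
    have hQ2 : 0 ≤ ∏ j ∈ Finset.Ioi k, (μ j - μ k) := by
      apply Finset.prod_nonneg
      intro j hj
      have := hμ (Finset.mem_Ioi.mp hj)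
      linarith
    have hnsq0 : 0 ≤ nsq := Complex.normSq_nonneg _
    have hmk : m - (k : ℕ) = (m - 1 - (k : ℕ)) + 1 := by
      have := k.isLt
      omega
    rw [hmk, pow_succ, hPfact, hneg]
    have he2 : (-1 : ℝ) ^ (m - 1 - (k : ℕ)) * (-1) ^ (m - 1 - (k : ℕ)) = 1 := by
      rw [← mul_pow]; norm_num
    have hring : (-1 : ℝ) ^ (m - 1 - (k : ℕ)) * (-1)
          * -(nsq * ((∏ j ∈ Finset.Iio k, (μ k - μ j))
              * ((-1 : ℝ) ^ (m - 1 - (k : ℕ)) * ∏ j ∈ Finset.Ioi k, (μ j - μ k))))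
        = ((-1 : ℝ) ^ (m - 1 - (k : ℕ)) * (-1) ^ (m - 1 - (k : ℕ)))
            * (nsq * ((∏ j ∈ Finset.Iio k, (μ k - μ j))
              * (∏ j ∈ Finset.Ioi k, (μ j - μ k)))) := by
      ring
    rw [hring, he2, one_mul]
    exact mul_nonneg hnsq0 (mul_nonneg hQ1 hQ2)

/-- The corner-bordered complex Jacobi matrix of the class `𝒥_n`: real diagonal
entries `c 0, …, c (n−2)`, complex entry `a` at position `(n−1, n−1)`, superdiagonal
entries `b 0, …, b (n−2)` with their conjugates on the subdiagonal, and corner entries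
`conj (b (n−1))` at `(0, n−1)` and `b (n−1)` at `(n−1, 0)`. -/
def cornerJacobi (n : ℕ) (c : ℕ → ℝ) (b : ℕ → ℂ) (a : ℂ) :
    Matrix (Fin n) (Fin n) ℂ :=
  Matrix.of fun i j =>
    if (i : ℕ) = (j : ℕ) then (if (i : ℕ) = n - 1 then a else ((c (i : ℕ) : ℝ) : ℂ))
    else if (i : ℕ) = 0 ∧ (j : ℕ) = n - 1 then (starRingEnd ℂ) (b (n - 1))
    else if (i : ℕ) = n - 1 ∧ (j : ℕ) = 0 then b (n - 1)
    else if (i : ℕ) + 1 = (j : ℕ) then b (i : ℕ)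
    else if (j : ℕ) + 1 = (i : ℕ) then (starRingEnd ℂ) (b (j : ℕ))
    else 0

/-- The leading principal `(n−1)×(n−1)` submatrix of `cornerJacobi n c b a`. -/
def cornerJacobiSub (n : ℕ) (c : ℕ → ℝ) (b : ℕ → ℂ) (a : ℂ) :
    Matrix (Fin (n - 1)) (Fin (n - 1)) ℂ :=
  (cornerJacobi n c b a).submatrix (Fin.castLE (Nat.sub_le n 1)) (Fin.castLE (Nat.sub_le n 1))

/-- for `J_n ∈ 𝒥_n` with leading principal submatrix `J_{n−1}` having
eigenvalues `μ_1 < … < μ_{n−1}`, one has `(−1)^{n−k} χ_n(μ_k) ≥ 0` for all `k`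
(the value `χ_n(μ_k)` being real). -/
theorem stmt7 (n : ℕ) (hn : 3 ≤ n) (c : ℕ → ℝ) (b : ℕ → ℂ) (a : ℂ)
    (hb : ∀ k : ℕ, k < n → b k ≠ 0)
    (μ : Fin (n - 1) → ℝ) (hμ : StrictMono μ)
    (hchar : (cornerJacobiSub n c b a).charpoly = ∏ j, (X - C ((μ j : ℂ)))) :
    ∀ k : Fin (n - 1),
      (((cornerJacobi n c b a).charpoly.eval ((μ k : ℂ))).im = 0) ∧
      0 ≤ (-1 : ℝ) ^ (n - 1 - (k : ℕ))
          * (((cornerJacobi n c b a).charpoly.eval ((μ k : ℂ))).re) := by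
  obtain ⟨m, rfl⟩ : ∃ m, n = m + 1 := ⟨n - 1, by omega⟩
  intro k
  set J := cornerJacobi (m+1) c b a with hJ
  set A := cornerJacobiSub (m+1) c b a with hA
  have hsub : ∀ i j : Fin (m + 1 - 1), A i j = J (Fin.castSucc i) (Fin.castSucc j) :=
    fun i j => rfl
  have hm2 : 2 ≤ m := by omega
  have hAH : A.IsHermitian := by
    rw [Matrix.IsHermitian]
    ext i j
    have hi : (i : ℕ) < m := by have := i.isLt; omega
    have hj : (j : ℕ) < m := by have := j.isLt; omega
    simp only [hA, Matrix.conjTranspose_apply, cornerJacobiSub, Matrix.submatrix_apply,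
      cornerJacobi, Matrix.of_apply, Fin.coe_castLE, Nat.add_sub_cancel]
    split_ifs <;> first
      | (exfalso; (try simp only [true_and, and_true] at *); omega)
      | (rw [show (j : ℕ) = (i : ℕ) by omega]; simp [Complex.conj_ofReal]; done)
      | (simp [Complex.conj_ofReal]; done)
      | (simp; done)
  have hcorner : ∀ j : Fin (m + 1 - 1), J (Fin.last m) (Fin.castSucc j)
      = starRingEnd ℂ (J (Fin.castSucc j) (Fin.last m)) := by
    intro j
    have hj : (j : ℕ) < m := j.isLt
    simp only [hJ, cornerJacobi, Matrix.of_apply, Fin.coe_castSucc, Fin.val_last,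
      Nat.add_sub_cancel]
    split_ifs <;> first
      | (exfalso; (try simp only [true_and, and_true] at *); omega)
      | (simp; done)
      | rfl
  obtain ⟨t, ht1, ht2⟩ := main_lemma J A hsub hAH hcorner μ hμ hchar k
  rw [ht1]
  constructor
  · simp
  · simpa using ht2
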